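/- Let R be a commutative ring such that for every minimal prime p of R there exists a finitely generated ideal I ⊆ p with the property that p is the unique minimal prime of R containing I (i.e., {p} = Min(R) ∩ V(I)). Then R has only finitely many minimal prime ideals. -/

import Mathlib

/-- If every minimal prime `p` of `R` contains a finitely generated ideal `I`
such that `p` is the unique minimal prime containing `I`, then `R` has only
finitely many minimal primes. -/
theorem minimalPrimes_finite_of_fg_separating {R : Type*} [CommRing R]
    (h : ∀ p ∈ minimalPrimes R, ∃ I : Ideal R, I.FG ∧ I ≤ p ∧
      ∀ q ∈ minimalPrimes R, I ≤ q → q = p) :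
    (minimalPrimes R).Finite := by
  classical
  choose I hIfg hIle hIuniq using h
  set f : minimalPrimes R → Ideal R := fun p => I p p.2 with hf
  have prodFG : ∀ s : Multiset (minimalPrimes R), ((s.map f).prod).FG := by
    intro s
    induction s using Multiset.induction_on with
    | empty =>
        simp only [Multiset.map_zero, Multiset.prod_zero]
        exact ⟨{1}, by simp [Ideal.one_eq_top]⟩
    | cons a s ih =>
        simp only [Multiset.map_cons, Multiset.prod_cons]
        exact Submodule.FG.mul (hIfg a a.2) ih
  have key : ∃ s : Multiset (minimalPrimes R), (s.map f).prod ≤ nilradical R := by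
    by_contra hcon
    push_neg at hcon
    set S : Set (Ideal R) :=
      {J | ∀ s : Multiset (minimalPrimes R), ¬ (s.map f).prod ≤ J} with hS
    have hnil : nilradical R ∈ S := fun s hs => hcon s hs
    have hchaincond : ∀ c ⊆ S, IsChain (· ≤ ·) c → ∀ y ∈ c, ∃ ub ∈ S, ∀ z ∈ c, z ≤ ub := by
      intro c hcS hchain y hy
      refine ⟨sSup c, ?_, fun z hz => le_sSup hz⟩
      intro s hs
      have hfgc : IsCompactElement ((s.map f).prod) :=
        (Submodule.fg_iff_compact _).mp (prodFG s)
      obtain ⟨x, hxc, hlex⟩ :=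
        (CompleteLattice.isCompactElement_iff_le_of_directed_sSup_le _ _).mp hfgc
          c ⟨y, hy⟩ hchain.directedOn hs
      exact hcS hxc s hlex
    obtain ⟨m, hm0, hmS⟩ := zorn_le_nonempty₀ S hchaincond (nilradical R) hnil
    have hmne : m ≠ ⊤ := by
      intro ht
      exact hmS.prop 0 (by simp [ht])
    have hmprime : m.IsPrime := by
      refine ⟨hmne, ?_⟩
      intro a b hab
      by_contra hcon2
      push_neg at hcon2
      obtain ⟨ha, hb⟩ := hcon2
      have step : ∀ x : R, x ∉ m → ∃ s : Multiset (minimalPrimes R),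
          (s.map f).prod ≤ m ⊔ Ideal.span {x} := by
        intro x hx
        by_contra hc
        push_neg at hc
        have hmem : m ⊔ Ideal.span {x} ∈ S := fun s hs => hc s hs
        have hle : m ⊔ Ideal.span {x} ≤ m := hmS.2 hmem le_sup_left
        exact hx (hle (Ideal.mem_sup_right (Ideal.mem_span_singleton_self x)))
      obtain ⟨s₁, hs₁⟩ := step a ha
      obtain ⟨s₂, hs₂⟩ := step b hb
      have hmul : (m ⊔ Ideal.span {a}) * (m ⊔ Ideal.span {b}) ≤ m := by
        rw [Ideal.sup_mul, Ideal.mul_sup, Ideal.mul_sup]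
        refine sup_le (sup_le Ideal.mul_le_right Ideal.mul_le_left)
          (sup_le Ideal.mul_le_right ?_)
        rw [Ideal.span_singleton_mul_span_singleton]
        exact (Ideal.span_singleton_le_iff_mem m).mpr hab
      refine hmS.prop (s₁ + s₂) ?_
      rw [Multiset.map_add, Multiset.prod_add]
      exact le_trans (Ideal.mul_mono hs₁ hs₂) hmul
    obtain ⟨p, hp, hpm⟩ := Ideal.exists_minimalPrimes_le (I := (⊥ : Ideal R))
      (J := m) bot_le
    have hpmin : p ∈ minimalPrimes R := hp
    refine hmS.prop {⟨p, hpmin⟩} ?_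
    simpa [hf] using le_trans (hIle p hpmin) hpm
  obtain ⟨s, hs⟩ := key
  have hsub : minimalPrimes R ⊆ (fun p : minimalPrimes R => (p : Ideal R)) '' {p | p ∈ s} := by
    intro q hq
    haveI : q.IsPrime := hq.1.1
    have hnq : (s.map f).prod ≤ q := hs.trans (nilradical_le_prime q)
    obtain ⟨p, hps, hpq⟩ := (Ideal.IsPrime.multiset_prod_map_le f ‹q.IsPrime›).mp hnq
    have := hIuniq p p.2 q hq hpq
    exact ⟨p, hps, this.symm⟩
  exact Set.Finite.subset (Set.Finite.image _ (s.finite_toSet)) hsub
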